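/- Fix ξ ∈ ℝ and, on U = {(x¹,x²) ∈ ℝ² : x¹ > 0}, consider the Type ℬ connection whose only nonzero Christoffel symbols are Γ_{11}{}^1 = −2/x¹, Γ_{11}{}^2 = ξ/x¹, Γ_{21}{}^1 = −1/x¹, Γ_{21}{}^2 = ξ/x¹, Γ_{22}{}^2 = 1/x¹. Then: (a) the Ricci tensor is ρ_{11} = ξ/(x¹)², ρ_{12} = ρ_{21} = 1/(x¹)², ρ_{22} = 0; (b) the Ricci tensor is parallel: ρ_{jk;i} = 0 on U for all i,j,k; (c) the torsion components are T¹ = 1/(2x¹), T² = −ξ/(2x¹); (d) the covariant derivative of the torsion satisfies T¹{}_{;1} = T¹{}_{;2} = −1/(2(x¹)²) and T²{}_{;1} = T²{}_{;2} = 0; in particular the torsion is not parallel. -/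

import Mathlib

noncomputable section

open scoped BigOperators

/-- The standard coordinate directions in `ℝ × ℝ`. -/
def coordVec : Fin 2 → ℝ × ℝ := ![(1, 0), (0, 1)]

/-- Partial derivative `∂_i f` of `f : ℝ × ℝ → ℝ`. -/
noncomputable def pder (i : Fin 2) (f : ℝ × ℝ → ℝ) (p : ℝ × ℝ) : ℝ :=
  fderiv ℝ f p (coordVec i)

/-- Curvature tensor `R_{ijk}{}^l` of the connection with Christoffel symbols `Γ`. -/
noncomputable def affCurv (Γ : Fin 2 → Fin 2 → Fin 2 → ℝ × ℝ → ℝ)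
    (i j k l : Fin 2) (p : ℝ × ℝ) : ℝ :=
  pder i (Γ j k l) p - pder j (Γ i k l) p +
    ∑ m : Fin 2, (Γ i m l p * Γ j k m p - Γ j m l p * Γ i k m p)

/-- Ricci tensor `ρ_{jk} = R_{1jk}{}^1 + R_{2jk}{}^2`. -/
noncomputable def affRicci (Γ : Fin 2 → Fin 2 → Fin 2 → ℝ × ℝ → ℝ)
    (j k : Fin 2) (p : ℝ × ℝ) : ℝ :=
  affCurv Γ 0 j k 0 p + affCurv Γ 1 j k 1 p

/-- Covariant derivative of the Ricci tensor,
`ρ_{jk;i} = ∂_i ρ_{jk} − Σ_m (Γ_{ij}{}^m ρ_{mk} + Γ_{ik}{}^m ρ_{jm})`. -/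
noncomputable def affRicciCov (Γ : Fin 2 → Fin 2 → Fin 2 → ℝ × ℝ → ℝ)
    (i j k : Fin 2) (p : ℝ × ℝ) : ℝ :=
  pder i (affRicci Γ j k) p -
    ∑ m : Fin 2, (Γ i j m p * affRicci Γ m k p + Γ i k m p * affRicci Γ j m p)

/-- Torsion components `T^k = (1/2)(Γ_{12}{}^k − Γ_{21}{}^k)`. -/
noncomputable def affTor (Γ : Fin 2 → Fin 2 → Fin 2 → ℝ × ℝ → ℝ)
    (k : Fin 2) (p : ℝ × ℝ) : ℝ :=
  (1 / 2) * (Γ 0 1 k p - Γ 1 0 k p)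

/-- Covariant derivative of the torsion tensor,
`T^k{}_{;i} = ∂_i T^k + Σ_m Γ_{im}{}^k T^m − (Γ_{i1}{}^1 + Γ_{i2}{}^2) T^k`. -/
noncomputable def affTorCov (Γ : Fin 2 → Fin 2 → Fin 2 → ℝ × ℝ → ℝ)
    (i k : Fin 2) (p : ℝ × ℝ) : ℝ :=
  pder i (affTor Γ k) p + (∑ m : Fin 2, Γ i m k p * affTor Γ m p)
    - (Γ i 0 0 p + Γ i 1 1 p) * affTor Γ k p

/-- The Type ℬ connection on `{x¹ > 0}` with only nonzero Christoffel symbols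
`Γ_{11}{}^1 = −2/x¹`, `Γ_{11}{}^2 = ξ/x¹`, `Γ_{21}{}^1 = −1/x¹`, `Γ_{21}{}^2 = ξ/x¹`,
`Γ_{22}{}^2 = 1/x¹`. -/
noncomputable def GammaB1 (ξ : ℝ) : Fin 2 → Fin 2 → Fin 2 → ℝ × ℝ → ℝ :=
  fun i j k p =>
    if i = 0 ∧ j = 0 ∧ k = 0 then -2 / p.1
    else if i = 0 ∧ j = 0 ∧ k = 1 then ξ / p.1
    else if i = 1 ∧ j = 0 ∧ k = 0 then -1 / p.1
    else if i = 1 ∧ j = 0 ∧ k = 1 then ξ / p.1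
    else if i = 1 ∧ j = 1 ∧ k = 1 then 1 / p.1
    else 0


section Aux

lemma pder_pr1 {g : ℝ → ℝ} {g' : ℝ} {p : ℝ × ℝ} (hg : HasDerivAt g g' p.1) (i : Fin 2) :
    pder i (fun q : ℝ × ℝ => g q.1) p = g' * (coordVec i).1 := by
  have h : HasFDerivAt (fun q : ℝ × ℝ => g q.1)
      ((ContinuousLinearMap.smulRight (1 : ℝ →L[ℝ] ℝ) g').comp
        (ContinuousLinearMap.fst ℝ ℝ ℝ)) p :=
    hg.hasFDerivAt.comp p hasFDerivAt_fst
  rw [pder, h.fderiv]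
  simp [mul_comm]

lemma pder_cdiv (c : ℝ) (i : Fin 2) {p : ℝ × ℝ} (h : p.1 ≠ 0) :
    pder i (fun q : ℝ × ℝ => c / q.1) p = -c / p.1 ^ 2 * (coordVec i).1 := by
  have hg : HasDerivAt (fun x : ℝ => c / x) (-c / p.1 ^ 2) p.1 := by
    have := (hasDerivAt_inv h).const_mul c
    simpa [div_eq_mul_inv, neg_div, mul_comm, mul_div_assoc] using this
  exact pder_pr1 hg i

lemma pder_cdivsq (c : ℝ) (i : Fin 2) {p : ℝ × ℝ} (h : p.1 ≠ 0) :
    pder i (fun q : ℝ × ℝ => c / q.1 ^ 2) p = -2 * c / p.1 ^ 3 * (coordVec i).1 := by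
  have hg : HasDerivAt (fun x : ℝ => c / x ^ 2) (-2 * c / p.1 ^ 3) p.1 := by
    have h2 := ((hasDerivAt_pow 2 p.1).inv (pow_ne_zero 2 h)).const_mul c
    rw [show (fun x : ℝ => c / x ^ 2) = fun y : ℝ => c * (y ^ 2)⁻¹ from
      funext fun x => div_eq_mul_inv _ _]
    refine HasDerivAt.congr_deriv h2 ?_
    push_cast
    field_simp
  exact pder_pr1 hg i

lemma pder_zero (i : Fin 2) (p : ℝ × ℝ) : pder i (fun _ : ℝ × ℝ => (0 : ℝ)) p = 0 := by
  simp [pder]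

lemma pder_congr {f g : ℝ × ℝ → ℝ} {p : ℝ × ℝ} (h : f =ᶠ[nhds p] g) (i : Fin 2) :
    pder i f p = pder i g p := by
  rw [pder, pder, h.fderiv_eq]

lemma GB000 (ξ : ℝ) : GammaB1 ξ 0 0 0 = fun q : ℝ × ℝ => -2 / q.1 :=
  funext fun q => by simp [GammaB1]
lemma GB001 (ξ : ℝ) : GammaB1 ξ 0 0 1 = fun q : ℝ × ℝ => ξ / q.1 :=
  funext fun q => by simp [GammaB1]
lemma GB010 (ξ : ℝ) : GammaB1 ξ 0 1 0 = fun _ : ℝ × ℝ => (0 : ℝ) :=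
  funext fun q => by simp [GammaB1]
lemma GB011 (ξ : ℝ) : GammaB1 ξ 0 1 1 = fun _ : ℝ × ℝ => (0 : ℝ) :=
  funext fun q => by simp [GammaB1]
lemma GB100 (ξ : ℝ) : GammaB1 ξ 1 0 0 = fun q : ℝ × ℝ => -1 / q.1 :=
  funext fun q => by simp [GammaB1]
lemma GB101 (ξ : ℝ) : GammaB1 ξ 1 0 1 = fun q : ℝ × ℝ => ξ / q.1 :=
  funext fun q => by simp [GammaB1]
lemma GB110 (ξ : ℝ) : GammaB1 ξ 1 1 0 = fun _ : ℝ × ℝ => (0 : ℝ) :=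
  funext fun q => by simp [GammaB1]
lemma GB111 (ξ : ℝ) : GammaB1 ξ 1 1 1 = fun q : ℝ × ℝ => 1 / q.1 :=
  funext fun q => by simp [GammaB1]

/-- The values of the Ricci tensor (up to the factor `1/x²`). -/
def rV (ξ : ℝ) : Fin 2 → Fin 2 → ℝ := ![![ξ, 1], ![1, 0]]

lemma ricci_val (ξ : ℝ) (j k : Fin 2) {p : ℝ × ℝ} (hp : 0 < p.1) :
    affRicci (GammaB1 ξ) j k p = rV ξ j k / p.1 ^ 2 := by
  have h := hp.ne'
  fin_cases j <;> fin_cases k <;> simp only [Fin.zero_eta, Fin.mk_one] <;>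
  · simp only [affRicci, affCurv, Fin.sum_univ_two, GB000, GB001, GB010, GB011, GB100, GB101,
      GB110, GB111, pder_zero, pder_cdiv _ _ h, coordVec, rV]
    norm_num [Matrix.cons_val_zero, Matrix.cons_val_one]
    try field_simp
    try ring

lemma ricciCov_zero (ξ : ℝ) (i j k : Fin 2) {p : ℝ × ℝ} (hp : 0 < p.1) :
    affRicciCov (GammaB1 ξ) i j k p = 0 := by
  have h := hp.ne'
  have hev : affRicci (GammaB1 ξ) j k =ᶠ[nhds p] fun q : ℝ × ℝ => rV ξ j k / q.1 ^ 2 := by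
    have hop : {q : ℝ × ℝ | 0 < q.1} ∈ nhds p :=
      (isOpen_lt continuous_const continuous_fst).mem_nhds hp
    filter_upwards [hop] with q hq using ricci_val ξ j k hq
  rw [affRicciCov, pder_congr hev i, pder_cdivsq _ _ h, Fin.sum_univ_two]
  simp only [ricci_val _ _ _ hp]
  fin_cases i <;> fin_cases j <;> fin_cases k <;> simp only [Fin.zero_eta, Fin.mk_one] <;>
  · simp only [GB000, GB001, GB010, GB011, GB100, GB101, GB110, GB111, coordVec, rV]
    norm_num [Matrix.cons_val_zero, Matrix.cons_val_one]
    try field_simp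
    try ring

lemma tor0 (ξ : ℝ) : affTor (GammaB1 ξ) 0 = fun q : ℝ × ℝ => (1 / 2) / q.1 :=
  funext fun q => by simp [affTor, GammaB1]; ring

lemma tor1 (ξ : ℝ) : affTor (GammaB1 ξ) 1 = fun q : ℝ × ℝ => (-ξ / 2) / q.1 :=
  funext fun q => by simp [affTor, GammaB1]; ring

lemma torCov_val (ξ : ℝ) (i k : Fin 2) {p : ℝ × ℝ} (hp : 0 < p.1) :
    affTorCov (GammaB1 ξ) i k p = (if k = 0 then -1 / (2 * p.1 ^ 2) else 0) := by
  have h := hp.ne'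
  fin_cases i <;> fin_cases k <;> simp only [Fin.zero_eta, Fin.mk_one] <;>
  · simp only [affTorCov, tor0, tor1, Fin.sum_univ_two,
      GB000, GB001, GB010, GB011, GB100, GB101, GB110, GB111,
      pder_cdiv _ _ h, coordVec]
    norm_num [Matrix.cons_val_zero, Matrix.cons_val_one]
    try field_simp
    try ring

end Aux

/-- for the Type ℬ structure above: (a) `ρ_{11} = ξ/(x¹)²`,
`ρ_{12} = ρ_{21} = 1/(x¹)²`, `ρ_{22} = 0`; (b) the Ricci tensor is parallel;
(c) `T¹ = 1/(2x¹)`, `T² = −ξ/(2x¹)`; (d) `T¹{}_{;1} = T¹{}_{;2} = −1/(2(x¹)²)` and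
`T²{}_{;1} = T²{}_{;2} = 0`; in particular the torsion is not parallel. -/
theorem typeB1_symmetric_nonparallel_torsion (ξ : ℝ) :
    (∀ p ∈ {q : ℝ × ℝ | 0 < q.1},
        affRicci (GammaB1 ξ) 0 0 p = ξ / p.1 ^ 2 ∧
        affRicci (GammaB1 ξ) 0 1 p = 1 / p.1 ^ 2 ∧
        affRicci (GammaB1 ξ) 1 0 p = 1 / p.1 ^ 2 ∧
        affRicci (GammaB1 ξ) 1 1 p = 0) ∧
    (∀ i j k, ∀ p ∈ {q : ℝ × ℝ | 0 < q.1}, affRicciCov (GammaB1 ξ) i j k p = 0) ∧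
    (∀ p ∈ {q : ℝ × ℝ | 0 < q.1},
        affTor (GammaB1 ξ) 0 p = 1 / (2 * p.1) ∧
        affTor (GammaB1 ξ) 1 p = -ξ / (2 * p.1)) ∧
    (∀ p ∈ {q : ℝ × ℝ | 0 < q.1},
        affTorCov (GammaB1 ξ) 0 0 p = -1 / (2 * p.1 ^ 2) ∧
        affTorCov (GammaB1 ξ) 1 0 p = -1 / (2 * p.1 ^ 2) ∧
        affTorCov (GammaB1 ξ) 0 1 p = 0 ∧
        affTorCov (GammaB1 ξ) 1 1 p = 0) ∧
    (∃ i k, ∃ p ∈ {q : ℝ × ℝ | 0 < q.1}, affTorCov (GammaB1 ξ) i k p ≠ 0) := by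
  constructor
  · intro p hp
    have hp' : 0 < p.1 := hp
    refine ⟨?_, ?_, ?_, ?_⟩ <;> rw [ricci_val ξ _ _ hp'] <;> simp [rV]
  refine ⟨fun i j k p hp => ricciCov_zero ξ i j k hp, ?_, ?_, ?_⟩
  · intro p hp
    have hp' : 0 < p.1 := hp
    constructor
    · rw [tor0]; ring
    · rw [tor1]; ring
  · intro p hp
    have hp' : 0 < p.1 := hp
    refine ⟨?_, ?_, ?_, ?_⟩ <;> rw [torCov_val ξ _ _ hp'] <;> norm_num
  · refine ⟨0, 0, (1, 0), by norm_num, ?_⟩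
    rw [torCov_val ξ 0 0 (by norm_num : (0:ℝ) < ((1:ℝ),(0:ℝ)).1)]
    norm_num
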